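/- The matrix A of the discrete five-point Laplacian system with Dirichlet boundary rows (as in Eq. (2)), namely A(v,v) = 1 for all grid points v, A(v,w) = -1/4 when v is interior and w is one of its four grid neighbors, and A(v,w) = 0 otherwise, is invertible. -/
import Mathlib

/-- The matrix of the discrete five-point Laplacian system with Dirichlet boundary rows. -/
noncomputable def fivePointMatrix (n m : ℕ) : Matrix (Fin (n + 1) × Fin (m + 1)) (Fin (n + 1) × Fin (m + 1)) ℝ :=
  Matrix.of fun v w =>
    if v = w then 1
    else if (0 < (v.1 : ℕ) ∧ (v.1 : ℕ) < n ∧ 0 < (v.2 : ℕ) ∧ (v.2 : ℕ) < m) ∧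
        (((v.1 : ℤ) - (w.1 : ℤ)).natAbs + ((v.2 : ℤ) - (w.2 : ℤ)).natAbs = 1) then -1/4
    else 0

lemma boundary_entry {n m : ℕ} (v w : Fin (n+1) × Fin (m+1))
    (hv : ¬(0 < (v.1:ℕ) ∧ (v.1:ℕ) < n ∧ 0 < (v.2:ℕ) ∧ (v.2:ℕ) < m)) :
    fivePointMatrix n m v w = if v = w then 1 else 0 := by
  simp only [fivePointMatrix, Matrix.of_apply]
  split_ifs with h1 h2
  · rfl
  · exact absurd h2.1 hv
  · rfl

lemma boundary_val {n m : ℕ} (u : Fin (n+1) × Fin (m+1) → ℝ)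
    (hu : (fivePointMatrix n m).mulVec u = 0)
    (v : Fin (n+1) × Fin (m+1))
    (hv : ¬(0 < (v.1:ℕ) ∧ (v.1:ℕ) < n ∧ 0 < (v.2:ℕ) ∧ (v.2:ℕ) < m)) :
    u v = 0 := by
  have h := congrFun hu v
  simp only [Matrix.mulVec, dotProduct, Pi.zero_apply] at h
  rw [Finset.sum_congr rfl (fun w _ => by rw [boundary_entry v w hv])] at h
  simpa [ite_mul] using h

lemma interior_row {n m : ℕ} (u : Fin (n+1) × Fin (m+1) → ℝ)
    (hu : (fivePointMatrix n m).mulVec u = 0)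
    (i j : ℕ) (hi0 : 0 < i) (hin : i < n) (hj0 : 0 < j) (hjm : j < m) :
    u (⟨i, by omega⟩, ⟨j, by omega⟩) =
      (u (⟨i-1, by omega⟩, ⟨j, by omega⟩) + u (⟨i+1, by omega⟩, ⟨j, by omega⟩)
        + u (⟨i, by omega⟩, ⟨j-1, by omega⟩) + u (⟨i, by omega⟩, ⟨j+1, by omega⟩)) / 4 := by
  set v : Fin (n+1) × Fin (m+1) := (⟨i, by omega⟩, ⟨j, by omega⟩) with hv
  set l : Fin (n+1) × Fin (m+1) := (⟨i-1, by omega⟩, ⟨j, by omega⟩) with hl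
  set r : Fin (n+1) × Fin (m+1) := (⟨i+1, by omega⟩, ⟨j, by omega⟩) with hr
  set d : Fin (n+1) × Fin (m+1) := (⟨i, by omega⟩, ⟨j-1, by omega⟩) with hd
  set t : Fin (n+1) × Fin (m+1) := (⟨i, by omega⟩, ⟨j+1, by omega⟩) with ht
  have hrow : ∀ w, fivePointMatrix n m v w =
      (if w = v then (1:ℝ) else 0) -
      ((if w = l then (1:ℝ) else 0) + (if w = r then 1 else 0) +
       (if w = d then 1 else 0) + (if w = t then 1 else 0)) / 4 := by
    rintro ⟨⟨a, ha⟩, ⟨b, hb⟩⟩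
    simp only [fivePointMatrix, Matrix.of_apply, hv, hl, hr, hd, ht, Prod.mk.injEq,
      Fin.mk.injEq, Prod.ext_iff, Fin.ext_iff]
    split_ifs <;> first | (exfalso; omega) | norm_num
  have h := congrFun hu v
  simp only [Matrix.mulVec, dotProduct, Pi.zero_apply] at h
  rw [Finset.sum_congr rfl (fun w _ => by rw [hrow w])] at h
  simp only [sub_mul, add_mul, div_mul_eq_mul_div, ite_mul, one_mul, zero_mul,
    Finset.sum_sub_distrib, ← Finset.sum_div, Finset.sum_add_distrib,
    Finset.sum_ite_eq', Finset.mem_univ, if_true] at h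
  linarith

lemma fp_nonpos {n m : ℕ} (u : Fin (n+1) × Fin (m+1) → ℝ)
    (hu : (fivePointMatrix n m).mulVec u = 0) (v : Fin (n+1) × Fin (m+1)) : u v ≤ 0 := by
  by_contra hpos
  push_neg at hpos
  set M : ℝ := Finset.univ.sup' ⟨v, Finset.mem_univ v⟩ u with hM
  have hMpos : 0 < M := lt_of_lt_of_le hpos (Finset.le_sup' u (Finset.mem_univ v))
  have hle : ∀ w : Fin (n+1) × Fin (m+1), u w ≤ M := fun w => Finset.le_sup' u (Finset.mem_univ w)
  have key : ∀ i : ℕ, ∀ (hi : i < n + 1) (j : Fin (m+1)), u (⟨i, hi⟩, j) ≠ M := by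
    intro i
    induction i with
    | zero =>
      intro hi j h
      have := boundary_val u hu (⟨0, hi⟩, j) (by simp)
      rw [h] at this; exact absurd this (ne_of_gt hMpos)
    | succ i ih =>
      intro hi j h
      rcases j with ⟨j, hj⟩
      by_cases hint : 0 < i + 1 ∧ i + 1 < n ∧ 0 < j ∧ j < m
      · obtain ⟨h1, h2, h3, h4⟩ := hint
        have heq := interior_row u hu (i+1) j h1 h2 h3 h4
        have e1 : u (⟨i+1-1, by omega⟩, ⟨j, by omega⟩) ≤ M := hle _
        have e2 : u (⟨i+1+1, by omega⟩, ⟨j, by omega⟩) ≤ M := hle _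
        have e3 : u (⟨i+1, by omega⟩, ⟨j-1, by omega⟩) ≤ M := hle _
        have e4 : u (⟨i+1, by omega⟩, ⟨j+1, by omega⟩) ≤ M := hle _
        have hvM : u (⟨i+1, by omega⟩, ⟨j, by omega⟩) = M := h
        have hlM : u (⟨i+1-1, by omega⟩, ⟨j, by omega⟩) = M := by
          rw [heq] at hvM; linarith
        exact ih (by omega) ⟨j, hj⟩ hlM
      · have := boundary_val u hu (⟨i+1, hi⟩, ⟨j, hj⟩) hint
        rw [h] at this; exact absurd this (ne_of_gt hMpos)
  obtain ⟨w, _, hw⟩ := Finset.exists_mem_eq_sup' (⟨v, Finset.mem_univ v⟩ : Finset.univ.Nonempty) u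
  exact key (w.1 : ℕ) w.1.isLt w.2 hw.symm

theorem fivePointMatrix_invertible (n m : ℕ) : IsUnit (fivePointMatrix n m) := by
  rw [Matrix.isUnit_iff_isUnit_det, isUnit_iff_ne_zero]
  intro hdet
  obtain ⟨u, hu0, hu⟩ := (Matrix.exists_mulVec_eq_zero_iff).mpr hdet
  have h1 : ∀ v, u v ≤ 0 := fp_nonpos u hu
  have h2 : ∀ v, -u v ≤ 0 := by
    have : (fivePointMatrix n m).mulVec (-u) = 0 := by
      rw [Matrix.mulVec_neg, hu, neg_zero]
    intro v; exact fp_nonpos (-u) this v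
  exact hu0 (funext fun v => le_antisymm (h1 v) (neg_nonpos.mp (h2 v)))
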